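/- With h(x,t) = c₁ + sin(x+t), u(x,t) = (c₁+sin(x+t))⁻¹ − 1, c₁ > 1, g > 0, and a function h_B satisfying ∂h_B/∂x = cos(x+t) − cos(x+t)/(g·(c₁+sin(x+t))³), the surface elevation h_E = h − h_B makes the Euler momentum equation ∂(h u)/∂t = −∂(h u²)/∂x − h·g·∂h_E/∂x hold for all x, t ∈ ℝ. -/

import Mathlib

/-- Euler momentum equation holds for the trigonometric solution with a
bathymetry h_B whose x-derivative is the stated expression. -/
theorem stmt_1 (c₁ g : ℝ) (hc : 1 < c₁) (hg : 0 < g)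
    (h u h_B h_E : ℝ → ℝ → ℝ)
    (hh : ∀ x t, h x t = c₁ + Real.sin (x + t))
    (hu : ∀ x t, u x t = (c₁ + Real.sin (x + t))⁻¹ - 1)
    (hBdiff : ∀ x t, DifferentiableAt ℝ (fun y => h_B y t) x)
    (hBx : ∀ x t, deriv (fun y => h_B y t) x =
      Real.cos (x + t) - Real.cos (x + t) / (g * (c₁ + Real.sin (x + t)) ^ 3))
    (hE : ∀ x t, h_E x t = h x t - h_B x t) :
    ∀ x t : ℝ,
      deriv (fun τ => h x τ * u x τ) t =
        -deriv (fun y => h y t * u y t ^ 2) x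
          - h x t * g * deriv (fun y => h_E y t) x := by
  intro x t
  have hpos : ∀ y : ℝ, (0:ℝ) < c₁ + Real.sin y := by
    intro y
    nlinarith [Real.neg_one_le_sin y]
  have hne : ∀ y : ℝ, c₁ + Real.sin y ≠ 0 := fun y => ne_of_gt (hpos y)
  -- inner derivatives
  have hsinY : ∀ y : ℝ, HasDerivAt (fun y => Real.sin (y + t)) (Real.cos (y + t)) y := by
    intro y
    simpa [Function.comp_def] using (Real.hasDerivAt_sin (y + t)).comp y ((hasDerivAt_id y).add_const t)
  have hsinT : HasDerivAt (fun τ => Real.sin (x + τ)) (Real.cos (x + t)) t := by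
    simpa [Function.comp_def] using (Real.hasDerivAt_sin (x + t)).comp t ((hasDerivAt_id t).const_add x)
  -- LHS
  have e1 : (fun τ => h x τ * u x τ) = fun τ => 1 - (c₁ + Real.sin (x + τ)) := by
    funext τ
    rw [hh, hu]
    field_simp [hne (x + τ)]
  have L : deriv (fun τ => h x τ * u x τ) t = -Real.cos (x + t) := by
    rw [e1]
    have : HasDerivAt (fun τ => 1 - (c₁ + Real.sin (x + τ))) (-(Real.cos (x + t))) t := by
      simpa [Pi.sub_def] using (hasDerivAt_const t (1:ℝ)).sub (hsinT.const_add c₁)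
    exact this.deriv
  -- flux term
  have e2 : (fun y => h y t * u y t ^ 2) =
      fun y => (c₁ + Real.sin (y + t))⁻¹ - 2 + (c₁ + Real.sin (y + t)) := by
    funext y
    rw [hh, hu]
    field_simp [hne (y + t)]
    ring
  have F : deriv (fun y => h y t * u y t ^ 2) x =
      -Real.cos (x + t) / (c₁ + Real.sin (x + t)) ^ 2 + Real.cos (x + t) := by
    rw [e2]
    have h1 : HasDerivAt (fun y => c₁ + Real.sin (y + t)) (Real.cos (x + t)) x :=
      (hsinY x).const_add c₁
    have h2 := (h1.inv (hne (x + t))).sub_const 2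
    have h3 := h2.add h1
    simpa [Pi.add_def] using h3.deriv
  -- surface elevation term
  have hhd : HasDerivAt (fun y => h y t) (Real.cos (x + t)) x := by
    have : (fun y => h y t) = fun y => c₁ + Real.sin (y + t) := funext fun y => hh y t
    rw [this]; exact (hsinY x).const_add c₁
  have E : deriv (fun y => h_E y t) x =
      Real.cos (x + t) / (g * (c₁ + Real.sin (x + t)) ^ 3) := by
    have e3 : (fun y => h_E y t) = fun y => h y t - h_B y t := funext fun y => hE y t
    rw [e3, deriv_fun_sub hhd.differentiableAt (hBdiff x t), hhd.deriv, hBx]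
    ring
  rw [L, F, E, hh]
  have hg' : g ≠ 0 := ne_of_gt hg
  field_simp [hne (x + t)]
  ring
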